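/- Let G* be a rooted 3,4-map with a dual 4-GS labeling, and suppose a non-root arc a = (u,v) is special, meaning (right-init(a), right-term(a), left-term(a), left-init(a)) = (k, k, k+2, k+3) modulo 4 for some k ∈ {1,2,3,4}. Then the vertex u has degree 4 and the vertex v has degree 3. -/

import Mathlib

/-- The label jump from label `x` to label `y` (labels in `ZMod 4`, where
`1,2,3,4` are represented with `4 ≡ 0`): the unique `δ ∈ {0,1,2,3}` with
`x + δ ≡ y (mod 4)`. -/
def labelJump (x y : ZMod 4) : ℕ := (y - x).val

/-- A rooted 3,4-map (vertices `V`, non-root arcs `A`) endowed with a dual 4-GS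
labeling.  Around each vertex `v` the labels of its `deg v` corners in
clockwise order are encoded by a periodic function `cor v : ℕ → ZMod 4`.
The labeling satisfies: (L1*) the clockwise label jumps around every vertex
sum to 4; (L2*) consecutive corners around a vertex have distinct labels;
(L3*) for every non-root arc whose initial vertex has degree 3, the jump from
the left-initial corner to the right-initial corner plus the jump from the
right-initial corner to the right-terminal corner is at least 2.  Each arc
records the labels of its four incident corners, consistently with the corner
sequences around its endpoints. -/
structure DualGSMap where
  V : Type
  A : Type
  init : A → V
  term : A → V
  deg : V → ℕ
  deg34 : ∀ v, deg v = 3 ∨ deg v = 4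
  cor : V → ℕ → ZMod 4
  cor_periodic : ∀ v i, cor v (i + deg v) = cor v i
  leftInit : A → ZMod 4
  rightInit : A → ZMod 4
  leftTerm : A → ZMod 4
  rightTerm : A → ZMod 4
  /-- the left-initial and right-initial corners of an arc are consecutive in
  clockwise order around the initial vertex -/
  init_consec : ∀ a, ∃ i, cor (init a) i = leftInit a ∧
      cor (init a) (i + 1) = rightInit a
  /-- the right-terminal and left-terminal corners of an arc are consecutive in
  clockwise order around the terminal vertex -/
  term_consec : ∀ a, ∃ i, cor (term a) i = rightTerm a ∧
      cor (term a) (i + 1) = leftTerm a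
  L1 : ∀ v, ∑ i ∈ Finset.range (deg v), labelJump (cor v i) (cor v (i + 1)) = 4
  L2 : ∀ v i, cor v (i + 1) ≠ cor v i
  L3 : ∀ a, deg (init a) = 3 →
      2 ≤ labelJump (leftInit a) (rightInit a) + labelJump (rightInit a) (rightTerm a)

lemma periodic_mod {α : Type*} (g : ℕ → α) (d : ℕ)
    (h : ∀ i, g (i + d) = g i) (i : ℕ) : g i = g (i % d) := by
  have aux : ∀ q r, g (d * q + r) = g r := by
    intro q
    induction q with
    | zero => simp
    | succ n ih =>
      intro r
      have : d * (n + 1) + r = (d * n + r) + d := by ring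
      rw [this, h, ih]
  conv_lhs => rw [← Nat.div_add_mod i d]
  rw [aux]

lemma jump_pos {x y : ZMod 4} (h : y ≠ x) : 1 ≤ labelJump x y := by
  unfold labelJump
  have hne : y - x ≠ 0 := sub_ne_zero.mpr h
  exact Nat.one_le_iff_ne_zero.mpr fun h0 => hne ((ZMod.val_eq_zero _).mp h0)

/-- In a rooted 3,4-map with a dual 4-GS labeling, if a non-root
arc `a = (u,v)` is special, i.e.
`(right-init a, right-term a, left-term a, left-init a) = (k, k, k+2, k+3)`
modulo 4 for some label `k`, then `u` has degree 4 and `v` has degree 3. -/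
theorem special_arc_degrees (M : DualGSMap) (a : M.A) (k : ZMod 4)
    (h1 : M.rightInit a = k) (h2 : M.rightTerm a = k)
    (h3 : M.leftTerm a = k + 2) (h4 : M.leftInit a = k + 3) :
    M.deg (M.init a) = 4 ∧ M.deg (M.term a) = 3 := by
  constructor
  · rcases M.deg34 (M.init a) with h | h
    · exfalso
      have := M.L3 a h
      rw [h1, h2, h4] at this
      have e1 : labelJump (k + 3) k = 1 := by
        unfold labelJump
        have : k - (k + 3) = 1 := by
          have : -(3 : ZMod 4) = 1 := by decide
          linear_combination this
        rw [this]; rfl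
      have e2 : labelJump k k = 0 := by simp [labelJump]
      omega
    · exact h
  · rcases M.deg34 (M.term a) with h | h
    · exact h
    · exfalso
      set v := M.term a
      obtain ⟨i, hi1, hi2⟩ := M.term_consec a
      rw [h2] at hi1
      rw [h3] at hi2
      -- the jump at index i is 2
      have hper : ∀ j, M.cor v (j + M.deg v) = M.cor v j := M.cor_periodic v
      have hd : (0:ℕ) < M.deg v := by omega
      set f : ℕ → ℕ := fun j => labelJump (M.cor v j) (M.cor v (j + 1)) with hf
      have fper : ∀ j, f (j + M.deg v) = f j := by
        intro j
        simp only [hf]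
        have : j + M.deg v + 1 = (j + 1) + M.deg v := by ring
        rw [this, hper, hper]
      have fi : f i = 2 := by
        simp only [hf]
        rw [show M.cor v i = k from hi1, show M.cor v (i + 1) = k + 2 from hi2]
        unfold labelJump
        have : k + 2 - k = 2 := by ring
        rw [this]; rfl
      have fmod : f (i % M.deg v) = 2 := by
        rw [← periodic_mod f (M.deg v) fper i, fi]
      have fpos : ∀ j, 1 ≤ f j := fun j => jump_pos (M.L2 v j)
      have hsum : ∑ x ∈ Finset.range (M.deg v), f x = 4 := M.L1 v
      set j := i % M.deg v with hj
      have hjlt : j < M.deg v := Nat.mod_lt i hd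
      have hmem : j ∈ Finset.range (M.deg v) := Finset.mem_range.mpr hjlt
      have hsplit : ∑ x ∈ Finset.range (M.deg v), f x
          = f j + ∑ x ∈ (Finset.range (M.deg v)).erase j, f x :=
        (Finset.add_sum_erase _ f hmem).symm
      have hge : ((Finset.range (M.deg v)).erase j).card
          ≤ ∑ x ∈ (Finset.range (M.deg v)).erase j, f x := by
        calc ((Finset.range (M.deg v)).erase j).card
            = ∑ _x ∈ (Finset.range (M.deg v)).erase j, 1 := by simp
          _ ≤ ∑ x ∈ (Finset.range (M.deg v)).erase j, f x :=
              Finset.sum_le_sum fun x _ => fpos x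
      have hcard : ((Finset.range (M.deg v)).erase j).card = M.deg v - 1 := by
        rw [Finset.card_erase_of_mem hmem, Finset.card_range]
      rw [hsum] at hsplit
      omega
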